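/- Let n ≥ 1 and let μ, μ' : Fin n → ℝ satisfy μ i > 0 and μ' i > 0 for all i. Let t : Fin n → ℝ satisfy 0 < t i ≤ 1 for all i. Set D = maxᵢ (t i)^{1/μ i}, D' = maxᵢ (t i)^{1/μ' i}, and K = maxᵢ |μ i / μ' i − 1|. Then |log D' − log D| ≤ K · (−log D). In particular, if R ≥ 0 and D ≥ e^{−R}, then |log(D'/D)| ≤ K·R. -/

import Mathlib

open Real

theorem stmt_15
    (n : ℕ) (hn : 1 ≤ n) (μ μ' t : Fin n → ℝ)
    (hμ : ∀ i, 0 < μ i) (hμ' : ∀ i, 0 < μ' i)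
    (ht0 : ∀ i, 0 < t i) (ht1 : ∀ i, t i ≤ 1) :
    |Real.log (⨆ i, t i ^ (1 / μ' i)) - Real.log (⨆ i, t i ^ (1 / μ i))| ≤
        (⨆ i, |μ i / μ' i - 1|) * (-Real.log (⨆ i, t i ^ (1 / μ i))) ∧
      ∀ R : ℝ, 0 ≤ R → Real.exp (-R) ≤ (⨆ i, t i ^ (1 / μ i)) →
        |Real.log ((⨆ i, t i ^ (1 / μ' i)) / (⨆ i, t i ^ (1 / μ i)))| ≤
          (⨆ i, |μ i / μ' i - 1|) * R := by
  haveI : Nonempty (Fin n) := Fin.pos_iff_nonempty.mp hn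
  set a : Fin n → ℝ := fun i => Real.log (t i) * (1 / μ i) with ha
  set b : Fin n → ℝ := fun i => Real.log (t i) * (1 / μ' i) with hb
  have hbdd : ∀ f : Fin n → ℝ, BddAbove (Set.range f) :=
    fun f => (Set.finite_range f).bddAbove
  have hDa : (⨆ i, t i ^ (1 / μ i)) = Real.exp (⨆ i, a i) := by
    rw [Monotone.map_ciSup_of_continuousAt Real.continuous_exp.continuousAt
      Real.exp_monotone (hbdd a)]
    exact congrArg _ (funext fun i => Real.rpow_def_of_pos (ht0 i) _)
  have hDb : (⨆ i, t i ^ (1 / μ' i)) = Real.exp (⨆ i, b i) := by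
    rw [Monotone.map_ciSup_of_continuousAt Real.continuous_exp.continuousAt
      Real.exp_monotone (hbdd b)]
    exact congrArg _ (funext fun i => Real.rpow_def_of_pos (ht0 i) _)
  set A := ⨆ i, a i with hA
  set B := ⨆ i, b i with hB
  set K := ⨆ i, |μ i / μ' i - 1| with hK
  have hanp : ∀ i, a i ≤ 0 := fun i =>
    mul_nonpos_of_nonpos_of_nonneg (Real.log_nonpos (ht0 i).le (ht1 i))
      (one_div_nonneg.mpr (hμ i).le)
  have hAnp : A ≤ 0 := ciSup_le hanp
  have hKi : ∀ i, |μ i / μ' i - 1| ≤ K := fun i => le_ciSup (hbdd fun i => |μ i / μ' i - 1|) i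
  have hK0 : 0 ≤ K := le_trans (abs_nonneg _) (hKi (Classical.arbitrary _))
  have hbr : ∀ i, b i = (μ i / μ' i) * a i := by
    intro i
    have h1 := (hμ i).ne'
    have h2 := (hμ' i).ne'
    field_simp [ha, hb]
    simp only [ha, hb]
    field_simp
  -- upper bound : B ≤ A + K * (-A)
  have hub : B ≤ A + K * (-A) := by
    apply ciSup_le
    intro i
    have hr1 : 1 - K ≤ μ i / μ' i := by
      have := abs_le.mp (hKi i); linarith [this.1]
    have hr2 : μ i / μ' i ≤ 1 + K := by
      have := abs_le.mp (hKi i); linarith [this.2]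
    have hbi : b i ≤ (1 - K) * a i := by
      rw [hbr i]
      exact mul_le_mul_of_nonpos_right hr1 (hanp i)
    have hb0 : b i ≤ 0 := by
      rw [hbr i]
      exact mul_nonpos_of_nonneg_of_nonpos (div_nonneg (hμ i).le (hμ' i).le) (hanp i)
    have haA : a i ≤ A := le_ciSup (hbdd a) i
    rcases le_or_gt K 1 with h | h
    · nlinarith
    · nlinarith
  -- lower bound : (1+K)*A ≤ B
  have hlb : A - K * (-A) ≤ B := by
    obtain ⟨j, hj⟩ := Finite.exists_max a
    have hAj : A = a j := le_antisymm (ciSup_le hj) (le_ciSup (hbdd a) j)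
    have hr2 : μ j / μ' j ≤ 1 + K := by
      have := abs_le.mp (hKi j); linarith [this.2]
    have : (1 + K) * a j ≤ b j := by
      rw [hbr j]
      exact mul_le_mul_of_nonpos_right hr2 (hanp j)
    have hbj : b j ≤ B := le_ciSup (hbdd b) j
    nlinarith [hanp j]
  have hmain : |B - A| ≤ K * (-A) := abs_le.mpr ⟨by linarith, by linarith⟩
  rw [hDa, hDb, Real.log_exp, Real.log_exp]
  refine ⟨hmain, fun R hR hRD => ?_⟩
  have hAR : -R ≤ A := by
    have := Real.exp_le_exp.mp hRD; linarith
  rw [← Real.exp_sub, Real.log_exp]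
  calc |B - A| ≤ K * (-A) := hmain
    _ ≤ K * R := by nlinarith
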